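/- Let s_1 ≥ 0, t_1 ≥ 0, and γ_1 ≥ γ_2 ≥ 0 be real numbers. Then there exists a 2×2 complex matrix [[p, x],[y, q]] with |x| = s_1, |y| = t_1, and singular values γ_1 and γ_2, if and only if the following three inequalities hold: s_1 + t_1 ≤ γ_1 + γ_2, s_1 − t_1 ≤ γ_1 − γ_2, and t_1 − s_1 ≤ γ_1 − γ_2. -/

import Mathlib

/-- `M` is a Hermitian matrix whose eigenvalues, with multiplicity, are `{μ i : i}`. -/
def HasEigs {ι : Type} [Fintype ι] [DecidableEq ι] (M : Matrix ι ι ℂ) (μ : ι → ℝ) : Prop :=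
  ∃ U : Matrix ι ι ℂ, U * U.conjTranspose = 1 ∧ U.conjTranspose * U = 1 ∧
    M = U * Matrix.diagonal (fun i => (μ i : ℂ)) * U.conjTranspose

/-- `X` has singular values `s 1 ≥ s 2 ≥ ... ≥ s q ≥ 0` where `q = min(#rows, #cols)`:
`s` is weakly decreasing and nonnegative on `1..q`, and the eigenvalues of `Xᴴ * X`
are `s 1 ^ 2, ..., s q ^ 2` together with `#cols - q` zeros. -/
def HasSVals {ι κ : Type} [Fintype ι] [Fintype κ] [DecidableEq κ]
    (X : Matrix ι κ ℂ) (q : ℕ) (s : ℕ → ℝ) : Prop :=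
  q = min (Fintype.card ι) (Fintype.card κ) ∧
  (∀ a b, 1 ≤ a → a ≤ b → b ≤ q → s b ≤ s a) ∧
  (∀ a, 1 ≤ a → a ≤ q → 0 ≤ s a) ∧
  ∃ e : κ ≃ Fin (Fintype.card κ),
    HasEigs (X.conjTranspose * X)
      (fun j => if (e j : ℕ) + 1 ≤ q then s ((e j : ℕ) + 1) ^ 2 else 0)

lemma hasEigs_trace {ι : Type} [Fintype ι] [DecidableEq ι] {M : Matrix ι ι ℂ} {μ : ι → ℝ}
    (h : HasEigs M μ) : M.trace = ∑ i, (μ i : ℂ) ∧ M.det = ∏ i, (μ i : ℂ) := by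
  obtain ⟨U, h1, h2, h3⟩ := h
  constructor
  · rw [h3, Matrix.trace_mul_comm, ← Matrix.mul_assoc, h2, Matrix.one_mul,
      Matrix.trace_diagonal]
  · rw [h3, Matrix.det_mul, Matrix.det_mul, Matrix.det_diagonal]
    have : U.det * U.conjTranspose.det = 1 := by rw [← Matrix.det_mul, h1, Matrix.det_one]
    calc U.det * (∏ i, (μ i : ℂ)) * U.conjTranspose.det
        = (∏ i, (μ i : ℂ)) * (U.det * U.conjTranspose.det) := by ring
      _ = ∏ i, (μ i : ℂ) := by rw [this, mul_one]

lemma isHermitian_hasEigs {ι : Type} [Fintype ι] [DecidableEq ι] {M : Matrix ι ι ℂ}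
    (hM : M.IsHermitian) : HasEigs M hM.eigenvalues := by
  refine ⟨hM.eigenvectorUnitary, ?_, ?_, ?_⟩
  · exact (Unitary.mem_iff.mp hM.eigenvectorUnitary.2).2
  · exact (Unitary.mem_iff.mp hM.eigenvectorUnitary.2).1
  · exact hM.spectral_theorem

lemma eig2 {M : Matrix (Fin 2) (Fin 2) ℂ} (hM : M.IsHermitian) (a b : ℝ)
    (htr : M.trace = ((a + b : ℝ) : ℂ)) (hdet : M.det = ((a * b : ℝ) : ℂ)) :
    HasEigs M ![a, b] := by
  have hE := isHermitian_hasEigs hM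
  obtain ⟨h1, h2⟩ := hasEigs_trace hE
  set ev := hM.eigenvalues with hev
  have hsum : ev 0 + ev 1 = a + b := by
    have := h1.symm.trans htr
    rw [Fin.sum_univ_two] at this
    exact_mod_cast this
  have hprod : ev 0 * ev 1 = a * b := by
    have := h2.symm.trans hdet
    rw [Fin.prod_univ_two] at this
    exact_mod_cast this
  have hcase : ev 0 = a ∨ ev 0 = b := by
    have : (ev 0 - a) * (ev 0 - b) = 0 := by linear_combination (ev 0) * hsum - hprod
    rcases mul_eq_zero.mp this with h | h
    · left; linarith
    · right; linarith
  obtain ⟨U, hU1, hU2, hU3⟩ := hE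
  rcases hcase with h0 | h0
  · have h1' : ev 1 = b := by linarith
    have : ev = ![a, b] := by
      funext j; fin_cases j <;> simp [h0, h1']
    exact ⟨U, hU1, hU2, by rw [← this]; exact hU3⟩
  · have h1' : ev 1 = a := by linarith
    have hevba : ev = ![b, a] := by
      funext j; fin_cases j <;> simp [h0, h1']
    set P : Matrix (Fin 2) (Fin 2) ℂ := ![![0, 1], ![1, 0]] with hP
    have hPH : P.conjTranspose = P := by
      ext i j; fin_cases i <;> fin_cases j <;> rw [Matrix.conjTranspose_apply] <;> simp [hP]
    have hPP : P * P = 1 := by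
      ext i j; fin_cases i <;> fin_cases j <;> rw [Matrix.mul_apply] <;>
        simp [hP, Matrix.mul_apply, Fin.sum_univ_two]
    have hD : Matrix.diagonal (fun i => ((![b, a] : Fin 2 → ℝ) i : ℂ)) =
        P * Matrix.diagonal (fun i => ((![a, b] : Fin 2 → ℝ) i : ℂ)) * P := by
      ext i j; fin_cases i <;> fin_cases j <;> simp only [Matrix.mul_apply, Fin.sum_univ_two] <;>
        simp [hP, Matrix.mul_apply, Fin.sum_univ_two, Matrix.diagonal]
    refine ⟨U * P, ?_, ?_, ?_⟩
    · rw [Matrix.conjTranspose_mul, hPH]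
      calc U * P * (P * U.conjTranspose) = U * (P * P) * U.conjTranspose := by
            simp [Matrix.mul_assoc]
        _ = 1 := by rw [hPP, Matrix.mul_one, hU1]
    · rw [Matrix.conjTranspose_mul, hPH]
      calc P * U.conjTranspose * (U * P) = P * (U.conjTranspose * U) * P := by
            simp [Matrix.mul_assoc]
        _ = 1 := by rw [hU2, Matrix.mul_one, hPP]
    · rw [Matrix.conjTranspose_mul, hPH, hU3, hevba, hD]
      simp [Matrix.mul_assoc]

lemma star_mul_self' (z : ℂ) : star z * z = ((‖z‖ ^ 2 : ℝ) : ℂ) := by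
  rw [Complex.star_def, mul_comm, Complex.mul_conj, Complex.normSq_eq_norm_sq]

section Bwd
variable (s1 t1 γ1 γ2 : ℝ)

noncomputable def pp : ℝ :=
  (Real.sqrt ((γ1 - γ2) ^ 2 - (s1 - t1) ^ 2) + Real.sqrt ((γ1 + γ2) ^ 2 - (s1 + t1) ^ 2)) / 2

noncomputable def qq : ℝ :=
  (Real.sqrt ((γ1 - γ2) ^ 2 - (s1 - t1) ^ 2) - Real.sqrt ((γ1 + γ2) ^ 2 - (s1 + t1) ^ 2)) / 2

noncomputable def ZZ : Matrix (Fin 2) (Fin 2) ℂ :=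
  ![![((pp s1 t1 γ1 γ2 : ℝ) : ℂ), (s1 : ℂ)], ![(t1 : ℂ), ((qq s1 t1 γ1 γ2 : ℝ) : ℂ)]]

variable {s1 t1 γ1 γ2}

lemma pq_sums (hs : 0 ≤ s1) (ht : 0 ≤ t1) (h2 : 0 ≤ γ2) (h12 : γ2 ≤ γ1)
    (hA : s1 + t1 ≤ γ1 + γ2) (hB : s1 - t1 ≤ γ1 - γ2) (hC : t1 - s1 ≤ γ1 - γ2) :
    pp s1 t1 γ1 γ2 ^ 2 + qq s1 t1 γ1 γ2 ^ 2 = γ1 ^ 2 + γ2 ^ 2 - s1 ^ 2 - t1 ^ 2 ∧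
    pp s1 t1 γ1 γ2 * qq s1 t1 γ1 γ2 - s1 * t1 = -(γ1 * γ2) := by
  have hu2 : Real.sqrt ((γ1 - γ2) ^ 2 - (s1 - t1) ^ 2) ^ 2
      = (γ1 - γ2) ^ 2 - (s1 - t1) ^ 2 := Real.sq_sqrt (by nlinarith)
  have hv2 : Real.sqrt ((γ1 + γ2) ^ 2 - (s1 + t1) ^ 2) ^ 2
      = (γ1 + γ2) ^ 2 - (s1 + t1) ^ 2 := Real.sq_sqrt (by nlinarith)
  constructor
  · rw [pp, qq]; linear_combination hu2 / 2 + hv2 / 2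
  · rw [pp, qq]; linear_combination hu2 / 4 - hv2 / 4
end Bwd

lemma arith_ineqs {a b s1 t1 γ1 γ2 : ℝ} (ha0 : 0 ≤ a) (hb0 : 0 ≤ b) (hs : 0 ≤ s1)
    (ht : 0 ≤ t1) (h1 : 0 ≤ γ1) (h2 : 0 ≤ γ2) (h12 : γ2 ≤ γ1)
    (hre : a ^ 2 + s1 ^ 2 + t1 ^ 2 + b ^ 2 = γ1 ^ 2 + γ2 ^ 2)
    (hup : γ1 * γ2 ≤ a * b + s1 * t1) (hlow : s1 * t1 ≤ a * b + γ1 * γ2) :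
    s1 + t1 ≤ γ1 + γ2 ∧ s1 - t1 ≤ γ1 - γ2 ∧ t1 - s1 ≤ γ1 - γ2 := by
  refine ⟨?_, ?_, ?_⟩
  · nlinarith [sq_nonneg (a - b), sq_nonneg (s1 + t1 + γ1 + γ2), add_nonneg hs ht,
      add_nonneg (add_nonneg h1 h2) (add_nonneg hs ht)]
  · nlinarith [sq_nonneg (a - b), sq_nonneg (s1 - t1 + (γ1 - γ2))]
  · nlinarith [sq_nonneg (a - b), sq_nonneg (t1 - s1 + (γ1 - γ2))]

theorem stmt16 (s1 t1 γ1 γ2 : ℝ) (hs : 0 ≤ s1) (ht : 0 ≤ t1)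
    (h12 : γ2 ≤ γ1) (h2 : 0 ≤ γ2) :
    (∃ Z : Matrix (Fin 2) (Fin 2) ℂ,
        ‖Z 0 1‖ = s1 ∧ ‖Z 1 0‖ = t1 ∧
        HasSVals Z 2 (fun a => if a ≤ 1 then γ1 else γ2)) ↔
    (s1 + t1 ≤ γ1 + γ2 ∧ s1 - t1 ≤ γ1 - γ2 ∧ t1 - s1 ≤ γ1 - γ2) := by
  have h1 : (0:ℝ) ≤ γ1 := le_trans h2 h12
  constructor
  · rintro ⟨Z, hx, hy, -, -, -, e, hE⟩
    obtain ⟨htr, hdet⟩ := hasEigs_trace hE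
    have he0lt : (e 0 : ℕ) < 2 := by simpa using (e 0).isLt
    have he1lt : (e 1 : ℕ) < 2 := by simpa using (e 1).isLt
    have hne : (e 0 : ℕ) ≠ (e 1 : ℕ) := by
      intro h
      have : e 0 = e 1 := Fin.ext h
      have : (0 : Fin 2) = 1 := e.injective this
      simp at this
    have hcase : ((e 0 : ℕ) = 0 ∧ (e 1 : ℕ) = 1) ∨ ((e 0 : ℕ) = 1 ∧ (e 1 : ℕ) = 0) := by omega
    have htr2 : (Z.conjTranspose * Z).trace = ((γ1 ^ 2 + γ2 ^ 2 : ℝ) : ℂ) := by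
      rw [htr, Fin.sum_univ_two]
      rcases hcase with ⟨ha, hb⟩ | ⟨ha, hb⟩ <;> rw [ha, hb] <;> norm_num <;> ring
    have hdet2 : (Z.conjTranspose * Z).det = ((γ1 ^ 2 * γ2 ^ 2 : ℝ) : ℂ) := by
      rw [hdet, Fin.prod_univ_two]
      rcases hcase with ⟨ha, hb⟩ | ⟨ha, hb⟩ <;> rw [ha, hb] <;> norm_num <;> ring
    have htr3 : (Z.conjTranspose * Z).trace =
        ((‖Z 0 0‖ ^ 2 + ‖Z 0 1‖ ^ 2 + ‖Z 1 0‖ ^ 2 +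
          ‖Z 1 1‖ ^ 2 : ℝ) : ℂ) := by
      simp only [Matrix.trace_fin_two, Matrix.mul_apply, Matrix.conjTranspose_apply,
        Fin.sum_univ_two, star_mul_self']
      push_cast
      ring
    set a := ‖Z 0 0‖ with hadef
    set b := ‖Z 1 1‖ with hbdef
    have ha0 : 0 ≤ a := norm_nonneg _
    have hb0 : 0 ≤ b := norm_nonneg _
    have hre : a ^ 2 + s1 ^ 2 + t1 ^ 2 + b ^ 2 = γ1 ^ 2 + γ2 ^ 2 := by
      have := htr3.symm.trans htr2
      rw [hx, hy] at this
      exact_mod_cast this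
    have hdet3 : (Z.conjTranspose * Z).det = ((‖Z.det‖ ^ 2 : ℝ) : ℂ) := by
      rw [Matrix.det_mul, Matrix.det_conjTranspose]
      exact star_mul_self' _
    have habssq : ‖Z.det‖ ^ 2 = (γ1 * γ2) ^ 2 := by
      have := hdet3.symm.trans hdet2
      have h' : ‖Z.det‖ ^ 2 = γ1 ^ 2 * γ2 ^ 2 := by exact_mod_cast this
      rw [h']; ring
    have habs : ‖Z.det‖ = γ1 * γ2 := by
      have h5 := norm_nonneg Z.det
      nlinarith [habssq, mul_nonneg h1 h2]
    have hdf : Z.det = Z 0 0 * Z 1 1 - Z 0 1 * Z 1 0 := Matrix.det_fin_two Z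
    have hup : γ1 * γ2 ≤ a * b + s1 * t1 := by
      have : ‖Z.det‖ ≤ ‖Z 0 0 * Z 1 1‖ + ‖Z 0 1 * Z 1 0‖ := by
        rw [hdf]
        simpa [sub_eq_add_neg] using norm_add_le (Z 0 0 * Z 1 1) (-(Z 0 1 * Z 1 0))
      rw [habs, norm_mul, norm_mul, hx, hy] at this
      linarith
    have hlow : s1 * t1 ≤ a * b + γ1 * γ2 := by
      have h3 : ‖Z 0 0 * Z 1 1 - Z.det‖ ≤
          ‖Z 0 0 * Z 1 1‖ + ‖Z.det‖ := by
        simpa [sub_eq_add_neg] using norm_add_le (Z 0 0 * Z 1 1) (-Z.det)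
      have h4 : Z 0 0 * Z 1 1 - Z.det = Z 0 1 * Z 1 0 := by rw [hdf]; ring
      rw [h4, norm_mul, norm_mul, habs, hx, hy] at h3
      linarith
    exact arith_ineqs ha0 hb0 hs ht h1 h2 h12 hre hup hlow
  · rintro ⟨hA, hB, hC⟩
    obtain ⟨hpq1, hpq2⟩ := pq_sums hs ht h2 h12 hA hB hC
    set p := pp s1 t1 γ1 γ2 with hpdef
    set q := qq s1 t1 γ1 γ2 with hqdef
    set Z := ZZ s1 t1 γ1 γ2 with hZdef
    have hZ00 : Z 0 0 = ((p : ℝ) : ℂ) := rfl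
    have hZ01 : Z 0 1 = ((s1 : ℝ) : ℂ) := rfl
    have hZ10 : Z 1 0 = ((t1 : ℝ) : ℂ) := rfl
    have hZ11 : Z 1 1 = ((q : ℝ) : ℂ) := rfl
    have htrace : (Z.conjTranspose * Z).trace = ((γ1 ^ 2 + γ2 ^ 2 : ℝ) : ℂ) := by
      simp only [Matrix.trace_fin_two, Matrix.mul_apply, Matrix.conjTranspose_apply,
        Fin.sum_univ_two, hZ00, hZ01, hZ10, hZ11, Complex.star_def, Complex.conj_ofReal]
      norm_cast
      nlinarith [hpq1]
    have hdetZ : Z.det = ((-(γ1 * γ2) : ℝ) : ℂ) := by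
      rw [Matrix.det_fin_two, hZ00, hZ01, hZ10, hZ11]
      norm_cast
    have hdet : (Z.conjTranspose * Z).det = ((γ1 ^ 2 * γ2 ^ 2 : ℝ) : ℂ) := by
      rw [Matrix.det_mul, Matrix.det_conjTranspose, hdetZ, Complex.star_def,
        Complex.conj_ofReal]
      norm_cast
      ring
    refine ⟨Z, ?_, ?_, ?_, ?_, ?_, ?_⟩
    · rw [hZ01, Complex.norm_real, Real.norm_eq_abs, abs_of_nonneg hs]
    · rw [hZ10, Complex.norm_real, Real.norm_eq_abs, abs_of_nonneg ht]
    · simp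
    · intro a b ha hab hb
      dsimp only
      split_ifs <;> first | rfl | linarith | omega
    · intro a ha hb
      dsimp only
      split_ifs <;> linarith
    · refine ⟨finCongr (Fintype.card_fin 2).symm, ?_⟩
      have hfun : (fun j : Fin (Fintype.card (Fin 2)) =>
          if ((finCongr (Fintype.card_fin 2).symm j : ℕ)) + 1 ≤ 2 then
            (fun a => if a ≤ 1 then γ1 else γ2)
              ((finCongr (Fintype.card_fin 2).symm j : ℕ) + 1) ^ 2
          else 0) = ![γ1 ^ 2, γ2 ^ 2] := by
        funext j; fin_cases j <;> rfl
      exact hfun.symm ▸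
        eig2 (Matrix.isHermitian_conjTranspose_mul_self Z) (γ1 ^ 2) (γ2 ^ 2) htrace hdet
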